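/- With s ∈ [0,1), t = (1+s)/2, and m₀ the integer part of log 2 / (log(1+s) - log(2s)) (for s > 0), the ℓ¹ distance between the geometric distributions with parameters s and t equals 2((1+s)/2)^(m₀+1) - 2 s^(m₀+1). -/
import Mathlib

theorem thermal_amplified_l1_distance (s : ℝ) (hs0 : 0 < s) (hs1 : s < 1) :
    let t := (1 + s) / 2
    let m₀ := ⌊Real.log 2 / (Real.log (1 + s) - Real.log (2 * s))⌋₊
    ∑' l : ℕ, |(1 - s) * s ^ l - (1 - t) * t ^ l| =
      2 * ((1 + s) / 2) ^ (m₀ + 1) - 2 * s ^ (m₀ + 1) := by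
  intro t m₀
  have ht0 : 0 < t := by simp only [t]; linarith
  have ht1 : t < 1 := by simp only [t]; linarith
  have hst : s < t := by simp only [t]; linarith
  have hden : 0 < Real.log (1 + s) - Real.log (2 * s) := by
    have := Real.log_lt_log (by linarith : (0:ℝ) < 2 * s) (by linarith : 2 * s < 1 + s)
    linarith
  set D := Real.log 2 / (Real.log (1 + s) - Real.log (2 * s)) with hDdef
  have hD0 : 0 ≤ D := div_nonneg (Real.log_nonneg (by norm_num)) hden.le
  have hlogts : Real.log t - Real.log s = Real.log (1 + s) - Real.log (2 * s) := by
    have h1 : Real.log t = Real.log (1 + s) - Real.log 2 := by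
      rw [show t = (1+s)/2 from rfl, Real.log_div (by linarith) (by norm_num)]
    have h2 : Real.log (2 * s) = Real.log 2 + Real.log s :=
      Real.log_mul (by norm_num) (ne_of_gt hs0)
    linarith
  have h1s : (1 : ℝ) - s = 2 * (1 - t) := by simp only [t]; ring
  set f : ℕ → ℝ := fun l => (1 - s) * s ^ l - (1 - t) * t ^ l with hfdef
  -- sign lemmas
  have keyle : ∀ l : ℕ, (l : ℝ) ≤ D → 0 ≤ f l := by
    intro l hl
    have hmul : (l : ℝ) * (Real.log (1 + s) - Real.log (2 * s)) ≤ Real.log 2 := by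
      rw [hDdef, le_div_iff₀ hden] at hl; linarith
    have hlog : Real.log (t ^ l) ≤ Real.log (2 * s ^ l) := by
      rw [Real.log_pow, Real.log_mul (by norm_num) (by positivity), Real.log_pow]
      push_cast
      nlinarith [hlogts]
    have hpow : t ^ l ≤ 2 * s ^ l :=
      (Real.log_le_log_iff (by positivity) (by positivity)).mp hlog
    have : (1 - t) * t ^ l ≤ (1 - s) * s ^ l := by
      rw [h1s]; nlinarith [sub_pos.mpr ht1]
    simp only [hfdef]; linarith
  have keygt : ∀ l : ℕ, D < (l : ℝ) → f l ≤ 0 := by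
    intro l hl
    have hmul : Real.log 2 ≤ (l : ℝ) * (Real.log (1 + s) - Real.log (2 * s)) := by
      rw [hDdef, div_lt_iff₀ hden] at hl; linarith
    have hlog : Real.log (2 * s ^ l) ≤ Real.log (t ^ l) := by
      rw [Real.log_pow, Real.log_mul (by norm_num) (by positivity), Real.log_pow]
      push_cast
      nlinarith [hlogts]
    have hpow : 2 * s ^ l ≤ t ^ l :=
      (Real.log_le_log_iff (by positivity) (by positivity)).mp hlog
    have : (1 - s) * s ^ l ≤ (1 - t) * t ^ l := by
      rw [h1s]; nlinarith [sub_pos.mpr ht1]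
    simp only [hfdef]; linarith
  have hs01 : |s| < 1 := by rw [abs_of_pos hs0]; exact hs1
  have ht01 : |t| < 1 := by rw [abs_of_pos ht0]; exact ht1
  have hsums : Summable (fun l : ℕ => (1 - s) * s ^ l) :=
    (summable_geometric_of_lt_one hs0.le hs1).mul_left _
  have hsumt : Summable (fun l : ℕ => (1 - t) * t ^ l) :=
    (summable_geometric_of_lt_one ht0.le ht1).mul_left _
  have hf : Summable f := hsums.sub hsumt
  have hfabs : Summable (fun l => |f l|) := hf.abs
  set N := m₀ + 1 with hN
  have hsplit := Summable.sum_add_tsum_nat_add N hfabs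
  rw [← hsplit]
  -- finite part
  have hfin : ∑ i ∈ Finset.range N, |f i| = t ^ N - s ^ N := by
    have h1 : ∀ i ∈ Finset.range N, |f i| = f i := by
      intro i hi
      rw [Finset.mem_range, hN, Nat.lt_succ_iff] at hi
      have hiD : (i : ℝ) ≤ D :=
        le_trans (by exact_mod_cast hi) (Nat.floor_le hD0)
      exact abs_of_nonneg (keyle i hiD)
    rw [Finset.sum_congr rfl h1]
    simp only [hfdef]
    rw [Finset.sum_sub_distrib, ← Finset.mul_sum, ← Finset.mul_sum,
      geom_sum_eq (ne_of_lt hs1) N, geom_sum_eq (ne_of_lt ht1) N]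
    have e1 : (1 - s) * ((s ^ N - 1) / (s - 1)) = 1 - s ^ N := by
      rw [mul_div_assoc', div_eq_iff (by linarith : s - 1 ≠ 0)]; ring
    have e2 : (1 - t) * ((t ^ N - 1) / (t - 1)) = 1 - t ^ N := by
      rw [mul_div_assoc', div_eq_iff (by linarith : t - 1 ≠ 0)]; ring
    rw [e1, e2]; ring
  -- tail part
  have htail : ∑' i : ℕ, |f (i + N)| = t ^ N - s ^ N := by
    have h1 : ∀ i : ℕ, |f (i + N)| = (1 - t) * t ^ N * t ^ i - (1 - s) * s ^ N * s ^ i := by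
      intro i
      have hiD : D < ((i + N : ℕ) : ℝ) := by
        have h2 : D < (m₀ : ℝ) + 1 := Nat.lt_floor_add_one D
        have : (N : ℝ) ≤ ((i + N : ℕ) : ℝ) := by push_cast; linarith [Nat.cast_nonneg (α := ℝ) i]
        push_cast at this ⊢
        push_cast [hN] at h2 ⊢
        linarith
      rw [abs_of_nonpos (keygt _ hiD)]
      simp only [hfdef]
      rw [pow_add, pow_add]
      ring
    rw [tsum_congr h1]
    rw [Summable.tsum_sub (((summable_geometric_of_lt_one ht0.le ht1).mul_left _))
      (((summable_geometric_of_lt_one hs0.le hs1).mul_left _)),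
      tsum_mul_left, tsum_mul_left, tsum_geometric_of_lt_one ht0.le ht1,
      tsum_geometric_of_lt_one hs0.le hs1]
    rw [mul_comm (1 - t) (t ^ N), mul_assoc, mul_inv_cancel₀ (by linarith : (1:ℝ) - t ≠ 0),
      mul_one, mul_comm (1 - s) (s ^ N), mul_assoc,
      mul_inv_cancel₀ (by linarith : (1:ℝ) - s ≠ 0), mul_one]
  rw [hfin, htail]
  have : t ^ N = ((1 + s) / 2) ^ N := rfl
  rw [this]; ring
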